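/- Let Γ be a finite graph, n : E(Γ) → ℕ_{>0}, and let Γ_n be the graph obtained by subdividing each edge e into a path with n_e edges. Then the number of maximal spanning forests of Γ_n equals Ψ_Γ evaluated at x_e = n_e. -/

import Mathlib

/-- A finite (multi)graph: finite sets of vertices and edges with head and tail maps.
Loops and multiple edges are allowed. -/
structure FinGraph where
  V : Type
  E : Type
  [fintypeV : Fintype V]
  [fintypeE : Fintype E]
  [decEqV : DecidableEq V]
  [decEqE : DecidableEq E]
  s : E → V
  t : E → V

open Finset MeasureTheory

attribute [instance] FinGraph.fintypeV FinGraph.fintypeE FinGraph.decEqV FinGraph.decEqE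

namespace FinGraph

variable (G : FinGraph)

/-- The boundary map `d : C₁(Γ,R) → C₀(Γ,R)` of the graph viewed as a CW complex. -/
noncomputable def boundary (R : Type) [CommRing R] : (G.E → R) →ₗ[R] (G.V → R) where
  toFun γ := fun v =>
    ∑ e : G.E, γ e * ((if G.t e = v then (1 : R) else 0) - (if G.s e = v then (1 : R) else 0))
  map_add' a b := by
    funext v
    simp [add_mul, Finset.sum_add_distrib]
  map_smul' r a := by
    funext v
    simp [Finset.mul_sum, mul_assoc]

/-- The coboundary map `d* : C⁰(Γ,R) → C¹(Γ,R)`. -/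
noncomputable def coboundary (R : Type) [CommRing R] : (G.V → R) →ₗ[R] (G.E → R) where
  toFun f := fun e => f (G.t e) - f (G.s e)
  map_add' a b := by funext e; simp; ring
  map_smul' r a := by funext e; simp [mul_sub]

/-- First homology `H₁(Γ,R)`, i.e. the cycle space: the kernel of the boundary map. -/
noncomputable def H1 (R : Type) [CommRing R] : Submodule R (G.E → R) := LinearMap.ker (G.boundary R)

/-- First cohomology `H¹(Γ,R) = C¹(Γ,R)/im d*`. -/
abbrev H1Cohomology (R : Type) [CommRing R] := (G.E → R) ⧸ LinearMap.range (G.coboundary R)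

/-- Pointwise rescaling of cochains by a weight function `x`. -/
noncomputable def scale (R : Type) [CommRing R] (x : G.E → R) : (G.E → R) →ₗ[R] (G.E → R) where
  toFun γ := fun e => x e * γ e
  map_add' a b := by funext e; simp [mul_add]
  map_smul' r a := by funext e; simp; ring

/-- The map `τ_x : H₁(Γ,R) → H¹(Γ,R)`, `γ ↦ ∑_e x_e ⟨γ,e⟩ [e]`. -/
noncomputable def tau (R : Type) [CommRing R] (x : G.E → R) : G.H1 R →ₗ[R] G.H1Cohomology R :=
  (LinearMap.range (G.coboundary R)).mkQ ∘ₗ (G.scale R x) ∘ₗ (G.H1 R).subtype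

/-- A maximal spanning forest, characterised algebraically: a set of edges supporting no
nonzero cycle (i.e. the subgraph is a forest), whose complement has cardinality
`h₁(Γ) = rank H₁(Γ,ℤ)` (i.e. the forest has the maximal number `|V| - c(Γ)` of edges). -/
def IsMaxForest (T : Finset G.E) : Prop :=
  (∀ γ : G.E → ℤ, G.boundary ℤ γ = 0 → (∀ e, e ∉ T → γ e = 0) → γ = 0) ∧
    Tᶜ.card = Module.finrank ℤ (G.H1 ℤ)

open Classical in
/-- The Kirchhoff polynomial `Ψ_Γ = ∑_{T ∈ Arb(Γ)} ∏_{e ∉ T} x_e` evaluated at `x`. -/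
noncomputable def kirchhoff (R : Type) [CommSemiring R] (x : G.E → R) : R :=
  ∑ T ∈ Finset.univ.filter (fun T : Finset G.E => G.IsMaxForest T), ∏ e ∈ Tᶜ, x e

/-- Deletion `Γ ∖ e` of an edge. -/
def deleteEdge (e : G.E) : FinGraph where
  V := G.V
  E := {e' : G.E // e' ≠ e}
  s := fun e' => G.s e'.1
  t := fun e' => G.t e'.1

/-- Contraction `Γ / e` of an edge: the two endpoints of `e` are identified
(the vertex `s e` is redirected to `t e`), and `e` is removed. -/
def contractEdge (e : G.E) : FinGraph where
  V := G.V
  E := {e' : G.E // e' ≠ e}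
  s := fun e' => if G.s e'.1 = G.s e then G.t e else G.s e'.1
  t := fun e' => if G.t e'.1 = G.s e then G.t e else G.t e'.1

/-- `e` is a loop if its two endpoints coincide. -/
def IsLoop (e : G.E) : Prop := G.s e = G.t e

/-- Two vertices are adjacent if some edge joins them. -/
def Adj (u v : G.V) : Prop := ∃ e : G.E, (G.s e = u ∧ G.t e = v) ∨ (G.s e = v ∧ G.t e = u)

/-- Connectivity in the graph. -/
def Reachable (u v : G.V) : Prop := Relation.ReflTransGen G.Adj u v

/-- `e` is a bridge if after deleting `e` its endpoints are no longer connected. -/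
def IsBridge (e : G.E) : Prop := ¬ (G.deleteEdge e).Reachable (G.s e) (G.t e)

/-- `e` is ordinary if it is neither a loop nor a bridge. -/
def IsOrdinary (e : G.E) : Prop := ¬ G.IsLoop e ∧ ¬ G.IsBridge e

/-- The number of connected components of the graph. -/
noncomputable def numComponents : ℕ := Nat.card (Quot G.Adj)

/-- The number of maximal spanning forests of the graph. -/
noncomputable def numMaxForests : ℕ := Nat.card {T : Finset G.E // G.IsMaxForest T}

end FinGraph

namespace FinGraph

/-- The subdivision (fragmentation) `Γ_n` of `Γ`: each edge `e` is replaced by a path with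
`n e` edges, adding `n e − 1` intermediate vertices. -/
def subdivide (G : FinGraph) (n : G.E → ℕ+) : FinGraph where
  V := G.V ⊕ (Σ e : G.E, Fin ((n e : ℕ) - 1))
  E := Σ e : G.E, Fin (n e : ℕ)
  s := fun p =>
    if h : (p.2 : ℕ) = 0 then Sum.inl (G.s p.1)
    else Sum.inr ⟨p.1, ⟨(p.2 : ℕ) - 1, by have := p.2.isLt; omega⟩⟩
  t := fun p =>
    if h : (p.2 : ℕ) = (n p.1 : ℕ) - 1 then Sum.inl (G.t p.1)
    else Sum.inr ⟨p.1, ⟨(p.2 : ℕ), by have := p.2.isLt; omega⟩⟩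

instance subdivDecEqV (G : FinGraph) (n : G.E → ℕ+) (x : (G.subdivide n).V)
    (y : G.V ⊕ (Σ e : G.E, Fin ((n e : ℕ) - 1))) : Decidable (x = y) :=
  (G.subdivide n).decEqV x y

instance subdivDecEqE (G : FinGraph) (n : G.E → ℕ+) (x : (G.subdivide n).E)
    (y : Σ e : G.E, Fin (n e : ℕ)) : Decidable (x = y) :=
  (G.subdivide n).decEqE x y

section Subdiv

variable (G : FinGraph) (n : G.E → ℕ+)

def ezero (e : G.E) : Fin (n e : ℕ) := ⟨0, (n e).pos⟩
def elast (e : G.E) : Fin (n e : ℕ) := ⟨(n e : ℕ) - 1, by have := (n e).pos; omega⟩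

variable {G n}

lemma sigma_fin_eq {m : G.E → ℕ} (a b : Σ e : G.E, Fin (m e)) :
    a = b ↔ a.1 = b.1 ∧ (a.2 : ℕ) = (b.2 : ℕ) := by
  constructor
  · rintro rfl; exact ⟨rfl, rfl⟩
  · rintro ⟨h1, h2⟩
    rcases a with ⟨a1, a2⟩; rcases b with ⟨b1, b2⟩
    dsimp at h1 h2
    subst h1
    simp [Fin.ext_iff, h2]

lemma boundary_apply (R : Type) [CommRing R] (G : FinGraph) (γ : G.E → R) (v : G.V) :
    G.boundary R γ v =
      ∑ e, γ e * ((if G.t e = v then (1:R) else 0) - (if G.s e = v then (1:R) else 0)) := rfl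

lemma subdivide_t_eq_inl (p : (G.subdivide n).E) (v : G.V) :
    ((G.subdivide n).t p = Sum.inl v) ↔ ((p.2 : ℕ) = (n p.1 : ℕ) - 1 ∧ G.t p.1 = v) := by
  show ((if h : (p.2 : ℕ) = (n p.1 : ℕ) - 1 then _ else _) : G.V ⊕ (Σ e : G.E, Fin ((n e : ℕ) - 1))) = _ ↔ _
  split_ifs with h
  · constructor
    · intro hh; exact ⟨h, Sum.inl_injective hh⟩
    · intro hh; rw [hh.2]
  · constructor
    · intro hh; cases hh
    · intro hh; exact absurd hh.1 h

lemma subdivide_s_eq_inl (p : (G.subdivide n).E) (v : G.V) :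
    ((G.subdivide n).s p = Sum.inl v) ↔ ((p.2 : ℕ) = 0 ∧ G.s p.1 = v) := by
  show ((if h : (p.2 : ℕ) = 0 then _ else _) : G.V ⊕ (Σ e : G.E, Fin ((n e : ℕ) - 1))) = _ ↔ _
  split_ifs with h
  · constructor
    · intro hh; exact ⟨h, Sum.inl_injective hh⟩
    · intro hh; rw [hh.2]
  · constructor
    · intro hh; cases hh
    · intro hh; exact absurd hh.1 h

lemma subdivide_t_eq_inr {e : G.E} {k : ℕ} (hk : k < (n e : ℕ) - 1) (hk' : k < (n e : ℕ))
    (p : (G.subdivide n).E) :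
    ((G.subdivide n).t p = Sum.inr ⟨e, ⟨k, hk⟩⟩) ↔ p = ⟨e, ⟨k, hk'⟩⟩ := by
  obtain ⟨e', i⟩ := p
  show ((if h : (i : ℕ) = (n e' : ℕ) - 1 then _ else _) : G.V ⊕ (Σ e : G.E, Fin ((n e : ℕ) - 1))) = _ ↔ _
  split_ifs with h
  · constructor
    · intro hh; cases hh
    · intro hh
      erw [sigma_fin_eq] at hh
      obtain ⟨h1, h2⟩ := hh
      dsimp at h1 h2 h
      subst h1
      omega
  · constructor
    · intro hh
      have h2 := Sum.inr_injective hh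
      erw [sigma_fin_eq] at h2 ⊢
      dsimp at h2 ⊢
      exact h2
    · intro hh
      erw [sigma_fin_eq] at hh
      obtain ⟨h1, h2⟩ := hh
      dsimp at h1 h2
      subst h1
      refine congrArg Sum.inr ?_
      erw [sigma_fin_eq]
      dsimp
      exact ⟨rfl, h2⟩

lemma subdivide_s_eq_inr {e : G.E} {k : ℕ} (hk : k < (n e : ℕ) - 1) (hk' : k + 1 < (n e : ℕ))
    (p : (G.subdivide n).E) :
    ((G.subdivide n).s p = Sum.inr ⟨e, ⟨k, hk⟩⟩) ↔ p = ⟨e, ⟨k + 1, hk'⟩⟩ := by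
  obtain ⟨e', i⟩ := p
  show ((if h : (i : ℕ) = 0 then _ else _) : G.V ⊕ (Σ e : G.E, Fin ((n e : ℕ) - 1))) = _ ↔ _
  split_ifs with h
  · constructor
    · intro hh; cases hh
    · intro hh
      erw [sigma_fin_eq] at hh
      obtain ⟨h1, h2⟩ := hh
      have h1' : e' = e := h1
      subst h1'
      have h2' : (i : ℕ) = k + 1 := by simpa using h2
      omega
  · constructor
    · intro hh
      have h2 := Sum.inr_injective hh
      rw [sigma_fin_eq] at h2
      obtain ⟨h1, h3⟩ := h2
      have h1' : e' = e := h1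
      subst h1'
      have h3' : (i : ℕ) - 1 = k := by simpa using h3
      erw [sigma_fin_eq]
      refine ⟨rfl, ?_⟩
      show (i : ℕ) = k + 1
      omega
    · intro hh
      erw [sigma_fin_eq] at hh
      obtain ⟨h1, h2⟩ := hh
      have h1' : e' = e := h1
      subst h1'
      have h2' : (i : ℕ) = k + 1 := by simpa using h2
      refine congrArg Sum.inr ?_
      erw [sigma_fin_eq]
      refine ⟨rfl, ?_⟩
      show (i : ℕ) - 1 = k
      omega

lemma subdivide_bnd_inr (γ : (G.subdivide n).E → ℤ) (e : G.E) (k : ℕ)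
    (hk : k < (n e : ℕ) - 1) :
    (G.subdivide n).boundary ℤ γ (Sum.inr ⟨e, ⟨k, hk⟩⟩) =
      γ ⟨e, ⟨k, by omega⟩⟩ - γ ⟨e, ⟨k + 1, by omega⟩⟩ := by
  erw [boundary_apply]
  calc ∑ p, γ p * ((if (G.subdivide n).t p = Sum.inr ⟨e, ⟨k, hk⟩⟩ then (1:ℤ) else 0)
          - (if (G.subdivide n).s p = Sum.inr ⟨e, ⟨k, hk⟩⟩ then (1:ℤ) else 0))
      = ∑ p, ((if p = ⟨e, ⟨k, by omega⟩⟩ then γ p else 0)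
          - (if p = ⟨e, ⟨k + 1, by omega⟩⟩ then γ p else 0)) := by
        refine Finset.sum_congr rfl fun p _ => ?_
        rw [mul_sub, mul_ite, mul_one, mul_zero, mul_ite, mul_one, mul_zero]
        congr 1
        · congr 1
          rw [eq_iff_iff]
          exact subdivide_t_eq_inr hk (by omega) p
        · congr 1
          rw [eq_iff_iff]
          exact subdivide_s_eq_inr hk (by omega) p
    _ = _ := by
        erw [Finset.sum_sub_distrib, Finset.sum_ite_eq' _ _ γ, Finset.sum_ite_eq' _ _ γ]
        exact congrArg₂ (· - ·) (if_pos (Finset.mem_univ _)) (if_pos (Finset.mem_univ _))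

end Subdiv
section Subdiv2

variable {G : FinGraph} {n : G.E → ℕ+}

lemma subdivide_bnd_inl (γ : (G.subdivide n).E → ℤ) (v : G.V) :
    (G.subdivide n).boundary ℤ γ (Sum.inl v) =
      ∑ e, (γ ⟨e, elast G n e⟩ * (if G.t e = v then (1:ℤ) else 0)
          - γ ⟨e, ezero G n e⟩ * (if G.s e = v then (1:ℤ) else 0)) := by
  erw [boundary_apply, ← Finset.univ_sigma_univ]
  erw [Finset.sum_sigma]
  refine Finset.sum_congr rfl fun e _ => ?_
  have ht : ∀ i : Fin (n e : ℕ),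
      (if (G.subdivide n).t ⟨e, i⟩ = Sum.inl v then (1:ℤ) else 0) =
      (if i = elast G n e then (1:ℤ) else 0) * (if G.t e = v then (1:ℤ) else 0) := by
    intro i
    simp only [subdivide_t_eq_inl (⟨e, i⟩ : (G.subdivide n).E)]
    by_cases h1 : (i : ℕ) = (n e : ℕ) - 1 <;> by_cases h2 : G.t e = v <;>
      simp [h1, h2, elast, Fin.ext_iff]
  have hs : ∀ i : Fin (n e : ℕ),
      (if (G.subdivide n).s ⟨e, i⟩ = Sum.inl v then (1:ℤ) else 0) =
      (if i = ezero G n e then (1:ℤ) else 0) * (if G.s e = v then (1:ℤ) else 0) := by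
    intro i
    simp only [subdivide_s_eq_inl (⟨e, i⟩ : (G.subdivide n).E)]
    by_cases h1 : (i : ℕ) = 0 <;> by_cases h2 : G.s e = v <;>
      simp [h1, h2, ezero, Fin.ext_iff]
  calc ∑ i : Fin (n e : ℕ), γ ⟨e, i⟩ *
        ((if (G.subdivide n).t ⟨e, i⟩ = Sum.inl v then (1:ℤ) else 0)
          - (if (G.subdivide n).s ⟨e, i⟩ = Sum.inl v then (1:ℤ) else 0))
      = ∑ i : Fin (n e : ℕ),
        ((if i = elast G n e then γ ⟨e, i⟩ * (if G.t e = v then (1:ℤ) else 0) else 0)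
          - (if i = ezero G n e then γ ⟨e, i⟩ * (if G.s e = v then (1:ℤ) else 0) else 0)) := by
        refine Finset.sum_congr rfl fun i _ => ?_
        rw [ht i, hs i, mul_sub]
        congr 1 <;> rw [ite_mul, zero_mul, mul_ite, mul_zero] <;>
          by_cases h : i = elast G n e <;> by_cases h' : i = ezero G n e <;> simp [h, h']
    _ = _ := by
        rw [Finset.sum_sub_distrib,
          Finset.sum_ite_eq' _ _ (fun i => γ ⟨e, i⟩ * (if G.t e = v then (1:ℤ) else 0)),
          Finset.sum_ite_eq' _ _ (fun i => γ ⟨e, i⟩ * (if G.s e = v then (1:ℤ) else 0))]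
        simp

lemma cycle_const (γ : (G.subdivide n).E → ℤ) (hγ : (G.subdivide n).boundary ℤ γ = 0)
    (e : G.E) (i j : Fin (n e : ℕ)) : γ ⟨e, i⟩ = γ ⟨e, j⟩ := by
  have key : ∀ k (h : k < (n e : ℕ)), γ ⟨e, ⟨k, h⟩⟩ = γ ⟨e, ezero G n e⟩ := by
    intro k
    induction k with
    | zero => intro h; rfl
    | succ k ih =>
      intro h
      have hk : k < (n e : ℕ) - 1 := by omega
      have h0 := congrFun hγ (Sum.inr ⟨e, ⟨k, hk⟩⟩)
      rw [subdivide_bnd_inr γ e k hk] at h0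
      have h0' : γ ⟨e, ⟨k, by omega⟩⟩ - γ ⟨e, ⟨k + 1, by omega⟩⟩ = 0 := h0
      have := ih (by omega)
      have heq : γ ⟨e, ⟨k + 1, h⟩⟩ = γ ⟨e, ⟨k, by omega⟩⟩ := by
        rw [sub_eq_zero] at h0'
        exact h0'.symm
      rw [heq, this]
  have hi := key i.1 i.isLt
  have hj := key j.1 j.isLt
  simp only [Fin.eta] at hi hj
  rw [hi, hj]

lemma L_mem (γ : G.E → ℤ) (hγ : G.boundary ℤ γ = 0) :
    (G.subdivide n).boundary ℤ (fun p => γ p.1) = 0 := by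
  funext w
  rcases w with v | ⟨e, k⟩
  · rw [subdivide_bnd_inl]
    have : ∑ e, (γ e * (if G.t e = v then (1:ℤ) else 0) - γ e * (if G.s e = v then (1:ℤ) else 0))
        = G.boundary ℤ γ v := by
      rw [boundary_apply]
      exact Finset.sum_congr rfl fun e _ => (mul_sub _ _ _).symm
    show ∑ e, (γ e * _ - γ e * _) = _
    rw [this, hγ]
    rfl
  · obtain ⟨k, hk⟩ := k
    rw [subdivide_bnd_inr (fun p => γ p.1) e k hk]
    show γ e - γ e = _
    simp
    rfl

lemma r_mem (γ : (G.subdivide n).E → ℤ) (hγ : (G.subdivide n).boundary ℤ γ = 0) :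
    G.boundary ℤ (fun e => γ ⟨e, ezero G n e⟩) = 0 := by
  funext v
  have h := congrFun hγ (Sum.inl v)
  rw [subdivide_bnd_inl] at h
  rw [boundary_apply]
  show ∑ e, γ ⟨e, ezero G n e⟩ * _ = (0 : G.V → ℤ) v
  calc ∑ e, γ ⟨e, ezero G n e⟩ *
        ((if G.t e = v then (1:ℤ) else 0) - (if G.s e = v then (1:ℤ) else 0))
      = ∑ e, (γ ⟨e, elast G n e⟩ * (if G.t e = v then (1:ℤ) else 0)
          - γ ⟨e, ezero G n e⟩ * (if G.s e = v then (1:ℤ) else 0)) := by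
        refine Finset.sum_congr rfl fun e _ => ?_
        rw [mul_sub, cycle_const γ hγ e (ezero G n e) (elast G n e)]
    _ = 0 := h

/-- The cycle spaces of `Γ` and its subdivision are isomorphic. -/
noncomputable def subdivH1Equiv (G : FinGraph) (n : G.E → ℕ+) :
    (G.subdivide n).H1 ℤ ≃ₗ[ℤ] G.H1 ℤ where
  toFun γ := ⟨fun e => γ.1 ⟨e, ezero G n e⟩, r_mem γ.1 γ.2⟩
  map_add' a b := rfl
  map_smul' r a := rfl
  invFun γ := ⟨fun p => γ.1 p.1, L_mem γ.1 γ.2⟩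
  left_inv γ := Subtype.ext (funext fun p => cycle_const γ.1 γ.2 p.1 (ezero G n p.1) p.2)
  right_inv γ := Subtype.ext rfl

lemma finrank_H1_subdivide (G : FinGraph) (n : G.E → ℕ+) :
    Module.finrank ℤ ((G.subdivide n).H1 ℤ) = Module.finrank ℤ (G.H1 ℤ) :=
  (subdivH1Equiv G n).finrank_eq

lemma finrank_le_compl (G : FinGraph) (T : Finset G.E)
    (hT : ∀ γ : G.E → ℤ, G.boundary ℤ γ = 0 → (∀ e, e ∉ T → γ e = 0) → γ = 0) :
    Module.finrank ℤ (G.H1 ℤ) ≤ Tᶜ.card := by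
  classical
  let φ : G.H1 ℤ →ₗ[ℤ] ({e : G.E // e ∈ Tᶜ} → ℤ) :=
    { toFun := fun γ e => γ.1 e.1
      map_add' := fun a b => rfl
      map_smul' := fun r a => rfl }
  have hinj : Function.Injective φ := by
    intro a b hab
    apply Subtype.ext
    have hz : a.1 - b.1 = 0 := by
      apply hT
      · rw [map_sub, a.2, b.2, sub_zero]
      · intro e he
        have := congrFun hab ⟨e, Finset.mem_compl.mpr he⟩
        simpa [φ, sub_eq_zero] using this
    have := sub_eq_zero.mp hz
    exact this
  have h := LinearMap.finrank_le_finrank_of_injective hinj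
  rwa [Module.finrank_pi, Fintype.card_coe] at h

end Subdiv2
section Subdiv3

open Classical

variable {G : FinGraph} {n : G.E → ℕ+}

/-- The set of edges of `Γ` all of whose subdivision edges lie in `S`. -/
noncomputable def edgeFull (S : Finset ((G.subdivide n).E)) : Finset G.E :=
  Finset.univ.filter (fun e => ∀ i : Fin (n e : ℕ), (⟨e, i⟩ : (G.subdivide n).E) ∈ S)

/-- The number of subdivision edges of `e` missing from `S`. -/
noncomputable def miss (S : Finset ((G.subdivide n).E)) (e : G.E) : ℕ :=
  (Finset.univ.filter (fun i : Fin (n e : ℕ) => (⟨e, i⟩ : (G.subdivide n).E) ∉ S)).card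

lemma mem_edgeFull {S : Finset ((G.subdivide n).E)} {e : G.E} :
    e ∈ (edgeFull S) ↔ ∀ i : Fin (n e : ℕ), (⟨e, i⟩ : (G.subdivide n).E) ∈ S := by
  simp [edgeFull]

lemma miss_eq_zero {S : Finset ((G.subdivide n).E)} {e : G.E} :
    miss S e = 0 ↔ e ∈ edgeFull S := by
  rw [mem_edgeFull, miss, Finset.card_eq_zero, Finset.filter_eq_empty_iff]
  simp

lemma card_compl_eq_sum_miss (S : Finset ((G.subdivide n).E)) :
    Sᶜ.card = ∑ e : G.E, miss S e := by
  erw [Finset.card_eq_sum_card_fiberwise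
    (f := Sigma.fst) (t := Finset.univ) (fun p _ => Finset.mem_univ _)]
  refine Finset.sum_congr rfl fun e _ => ?_
  rw [miss]
  refine (Finset.card_bij (fun i _ => (⟨e, i⟩ : (G.subdivide n).E)) ?_ ?_ ?_).symm
  · intro i hi
    erw [Finset.mem_filter, Finset.mem_compl]
    exact ⟨(Finset.mem_filter.mp hi).2, rfl⟩
  · intro i _ j _ hij
    rw [sigma_fin_eq] at hij
    exact Fin.ext hij.2
  · rintro ⟨e', i⟩ hp
    erw [Finset.mem_filter, Finset.mem_compl] at hp
    obtain ⟨h1, h2⟩ := hp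
    obtain rfl : e' = e := h2
    exact ⟨i, Finset.mem_filter.mpr ⟨Finset.mem_univ _, h1⟩, rfl⟩

/-- Forward transfer of forest-independence from the subdivision to `Γ`. -/
lemma indep_of_subdiv_indep {S : Finset ((G.subdivide n).E)}
    (hS : ∀ γ : (G.subdivide n).E → ℤ, (G.subdivide n).boundary ℤ γ = 0 →
      (∀ p, p ∉ S → γ p = 0) → γ = 0) :
    ∀ γ : G.E → ℤ, G.boundary ℤ γ = 0 → (∀ e, e ∉ edgeFull S → γ e = 0) → γ = 0 := by
  intro γ hγ hsupp
  have h0 : (fun p : (G.subdivide n).E => γ p.1) = 0 := by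
    apply hS _ (L_mem γ hγ)
    rintro ⟨e, i⟩ hp
    by_cases he : e ∈ edgeFull S
    · exact absurd (mem_edgeFull.mp he i) hp
    · exact hsupp e he
  funext e
  exact congrFun h0 ⟨e, ezero G n e⟩

/-- Backward transfer of forest-independence from `Γ` to the subdivision. -/
lemma subdiv_indep_of_indep {S : Finset ((G.subdivide n).E)}
    (hT : ∀ γ : G.E → ℤ, G.boundary ℤ γ = 0 → (∀ e, e ∉ edgeFull S → γ e = 0) → γ = 0) :
    ∀ γ : (G.subdivide n).E → ℤ, (G.subdivide n).boundary ℤ γ = 0 →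
      (∀ p, p ∉ S → γ p = 0) → γ = 0 := by
  intro γ hγ hsupp
  have h0 : (fun e => γ ⟨e, ezero G n e⟩) = 0 := by
    apply hT _ (r_mem γ hγ)
    intro e he
    rw [mem_edgeFull] at he
    push_neg at he
    obtain ⟨i, hi⟩ := he
    rw [cycle_const γ hγ e (ezero G n e) i]
    exact hsupp _ hi
  funext p
  obtain ⟨e, i⟩ := p
  rw [cycle_const γ hγ e i (ezero G n e)]
  exact congrFun h0 e

lemma one_le_miss {S : Finset ((G.subdivide n).E)} {e : G.E} (he : e ∉ edgeFull S) :
    1 ≤ miss S e := by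
  by_contra h
  exact he (miss_eq_zero.mp (by omega))

/-- The key characterisation of maximal forests of the subdivision. -/
lemma isMaxForest_subdivide_iff (S : Finset ((G.subdivide n).E)) :
    (G.subdivide n).IsMaxForest S ↔
      G.IsMaxForest (edgeFull S) ∧ ∀ e, e ∉ edgeFull S → miss S e = 1 := by
  constructor
  · rintro ⟨hind, hcard⟩
    have hindG := indep_of_subdiv_indep hind
    have hle : Module.finrank ℤ (G.H1 ℤ) ≤ (edgeFull S)ᶜ.card :=
      finrank_le_compl G (edgeFull S) hindG
    have hsum : Sᶜ.card = ∑ e ∈ (edgeFull S)ᶜ, miss S e := by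
      rw [card_compl_eq_sum_miss S]
      rw [← Finset.sum_filter_add_sum_filter_not Finset.univ (fun e => e ∈ (edgeFull S)ᶜ)]
      have h1 : ∑ e ∈ Finset.univ.filter (fun e => ¬ e ∈ (edgeFull S)ᶜ), miss S e = 0 := by
        refine Finset.sum_eq_zero fun e he => ?_
        rw [Finset.mem_filter, Finset.mem_compl, not_not] at he
        exact miss_eq_zero.mpr he.2
      rw [h1, add_zero]
      congr 1
      ext e
      simp
    have hge : (edgeFull S)ᶜ.card ≤ ∑ e ∈ (edgeFull S)ᶜ, miss S e := by
      calc (edgeFull S)ᶜ.card = ∑ _e ∈ (edgeFull S)ᶜ, 1 := by simp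
        _ ≤ _ := Finset.sum_le_sum fun e he => one_le_miss (Finset.mem_compl.mp he)
    have hr : Sᶜ.card = Module.finrank ℤ (G.H1 ℤ) := by
      rw [hcard, finrank_H1_subdivide]
    have heq1 : (edgeFull S)ᶜ.card = Module.finrank ℤ (G.H1 ℤ) := by omega
    have heq2 : ∑ e ∈ (edgeFull S)ᶜ, miss S e = (edgeFull S)ᶜ.card := by omega
    refine ⟨⟨hindG, heq1⟩, ?_⟩
    intro e he
    rw [← Finset.mem_compl] at he
    by_contra hne
    have h2 : 2 ≤ miss S e := by
      have := one_le_miss (Finset.mem_compl.mp he)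
      omega
    have hbig : (edgeFull S)ᶜ.card + 1 ≤ ∑ e ∈ (edgeFull S)ᶜ, miss S e := by
      rw [← Finset.add_sum_erase _ _ he]
      have : ((edgeFull S)ᶜ.erase e).card ≤ ∑ x ∈ (edgeFull S)ᶜ.erase e, miss S x := by
        calc ((edgeFull S)ᶜ.erase e).card = ∑ _x ∈ (edgeFull S)ᶜ.erase e, 1 := by simp
          _ ≤ _ := Finset.sum_le_sum fun x hx =>
              one_le_miss (Finset.mem_compl.mp (Finset.mem_of_mem_erase hx))
      have hc : ((edgeFull S)ᶜ.erase e).card = (edgeFull S)ᶜ.card - 1 :=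
        Finset.card_erase_of_mem he
      have hpos : 1 ≤ (edgeFull S)ᶜ.card := Finset.card_pos.mpr ⟨e, he⟩
      omega
    omega
  · rintro ⟨⟨hindG, hTcard⟩, hmiss⟩
    refine ⟨subdiv_indep_of_indep hindG, ?_⟩
    rw [card_compl_eq_sum_miss S, finrank_H1_subdivide, ← hTcard]
    rw [← Finset.sum_filter_add_sum_filter_not Finset.univ (fun e => e ∈ (edgeFull S)ᶜ)]
    have h1 : ∑ e ∈ Finset.univ.filter (fun e => ¬ e ∈ (edgeFull S)ᶜ), miss S e = 0 := by
      refine Finset.sum_eq_zero fun e he => ?_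
      rw [Finset.mem_filter, Finset.mem_compl, not_not] at he
      exact miss_eq_zero.mpr he.2
    have h2 : ∑ e ∈ Finset.univ.filter (fun e => e ∈ (edgeFull S)ᶜ), miss S e
        = ∑ e ∈ Finset.univ.filter (fun e => e ∈ (edgeFull S)ᶜ), 1 := by
      refine Finset.sum_congr rfl fun e he => ?_
      rw [Finset.mem_filter, Finset.mem_compl] at he
      exact hmiss e he.2
    rw [h1, add_zero, h2]
    have hfc : Finset.univ.filter (fun e => e ∈ (edgeFull S)ᶜ) = (edgeFull S)ᶜ := by
      ext e; simp
    rw [Finset.sum_const, smul_eq_mul, mul_one, hfc]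

end Subdiv3
section Subdiv4

open Classical

variable {G : FinGraph} {n : G.E → ℕ+}

/-- The spanning forest of the subdivision determined by a maximal forest `T` of `Γ`
and a choice, for each `e ∉ T`, of which subdivision edge of `e` to omit. -/
noncomputable def mkForest (T : Finset G.E) (f : ∀ e ∈ Tᶜ, Fin (n e : ℕ)) :
    Finset ((G.subdivide n).E) :=
  Finset.univ.filter (fun p => ∀ h : p.1 ∈ Tᶜ, p.2 ≠ f p.1 h)

lemma mem_mkForest {T : Finset G.E} {f : ∀ e ∈ Tᶜ, Fin (n e : ℕ)}
    {p : (G.subdivide n).E} :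
    p ∈ (mkForest T f) ↔ ∀ h : p.1 ∈ Tᶜ, p.2 ≠ f p.1 h := by
  simp [mkForest]

lemma edgeFull_mkForest {T : Finset G.E} {f : ∀ e ∈ Tᶜ, Fin (n e : ℕ)} :
    edgeFull (mkForest T f) = T := by
  ext e
  rw [mem_edgeFull]
  constructor
  · intro h
    by_contra he
    have he' : e ∈ Tᶜ := Finset.mem_compl.mpr he
    exact (mem_mkForest.mp (h (f e he'))) he' rfl
  · intro he i
    erw [mem_mkForest]
    intro h
    exact absurd he (Finset.mem_compl.mp h)

lemma miss_mkForest {T : Finset G.E} {f : ∀ e ∈ Tᶜ, Fin (n e : ℕ)}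
    {e : G.E} (he : e ∈ Tᶜ) :
    (Finset.univ.filter (fun i : Fin (n e : ℕ) =>
      (⟨e, i⟩ : (G.subdivide n).E) ∉ mkForest T f)) = {f e he} := by
  ext i
  simp only [Finset.mem_filter, Finset.mem_univ, true_and, Finset.mem_singleton]
  constructor
  · intro h
    by_contra hne
    exact h (mem_mkForest.mpr (fun h' => hne))
  · intro h hmem
    exact (mem_mkForest.mp hmem) he h

lemma mkForest_mem_fiber {T : Finset G.E} (hT : G.IsMaxForest T)
    (f : ∀ e ∈ Tᶜ, Fin (n e : ℕ)) :
    (G.subdivide n).IsMaxForest (mkForest T f) ∧ edgeFull (mkForest T f) = T := by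
  refine ⟨?_, edgeFull_mkForest⟩
  rw [isMaxForest_subdivide_iff, edgeFull_mkForest]
  refine ⟨hT, fun e he => ?_⟩
  rw [miss, miss_mkForest (Finset.mem_compl.mpr he)]
  simp

lemma fiber_card (T : Finset G.E) (hT : G.IsMaxForest T) :
    ((Finset.univ.filter (fun S : Finset ((G.subdivide n).E) =>
        (G.subdivide n).IsMaxForest S)).filter (fun S => edgeFull S = T)).card
      = ∏ e ∈ Tᶜ, (n e : ℕ) := by
  have hD : (Tᶜ.pi (fun e => (Finset.univ : Finset (Fin (n e : ℕ))))).card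
      = ∏ e ∈ Tᶜ, (n e : ℕ) := by
    rw [Finset.card_pi]
    refine Finset.prod_congr rfl fun e _ => ?_
    simp
  rw [← hD]
  refine (Finset.card_bij (fun f _ => mkForest T f) ?_ ?_ ?_).symm
  · intro f _
    obtain ⟨h1, h2⟩ := mkForest_mem_fiber hT f
    simp only [Finset.mem_filter, Finset.mem_univ, true_and]
    exact ⟨h1, h2⟩
  · intro f hf g hg hfg
    have : ∀ e (he : e ∈ Tᶜ), f e he = g e he := by
      intro e he
      by_contra hne
      have h1 : (⟨e, f e he⟩ : (G.subdivide n).E) ∉ mkForest T f := by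
        erw [mem_mkForest]
        push_neg
        exact ⟨he, rfl⟩
      have h2 : (⟨e, f e he⟩ : (G.subdivide n).E) ∈ mkForest T g := by
        erw [mem_mkForest]
        intro h
        exact hne
      have hfg' : mkForest T f = mkForest T g := hfg
      rw [hfg'] at h1
      exact h1 h2
    funext e he
    exact this e he
  · intro S hS
    simp only [Finset.mem_filter, Finset.mem_univ, true_and] at hS
    obtain ⟨hSmf, hST⟩ := hS
    have hchar := (isMaxForest_subdivide_iff S).mp hSmf
    have hmiss : ∀ e (he : e ∈ Tᶜ), ∃ a : Fin (n e : ℕ),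
        (Finset.univ.filter (fun i : Fin (n e : ℕ) =>
          (⟨e, i⟩ : (G.subdivide n).E) ∉ S)) = {a} := by
      intro e he
      apply Finset.card_eq_one.mp
      have := hchar.2 e (by rw [hST]; exact Finset.mem_compl.mp he)
      rwa [miss] at this
    choose f hf using hmiss
    refine ⟨f, ?_, ?_⟩
    · simp [Finset.mem_pi]
    · ext p
      obtain ⟨e, i⟩ := p
      erw [mem_mkForest]
      by_cases he : e ∈ Tᶜ
      · constructor
        · intro h
          have hi := h he
          by_contra hiS
          have : i ∈ (Finset.univ.filter (fun i : Fin (n e : ℕ) =>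
              (⟨e, i⟩ : (G.subdivide n).E) ∉ S)) := Finset.mem_filter.mpr ⟨Finset.mem_univ _, hiS⟩
          rw [hf e he] at this
          exact hi (Finset.mem_singleton.mp this)
        · intro hiS h
          intro hif
          have : i ∈ ({f e he} : Finset (Fin (n e : ℕ))) := by
            rw [Finset.mem_singleton]; exact hif
          rw [← hf e he] at this
          simp only [Finset.mem_filter] at this
          exact this.2 hiS
      · constructor
        · intro _
          have heT : e ∈ T := by
            by_contra h'
            exact he (Finset.mem_compl.mpr h')
          rw [← hST] at heT
          exact mem_edgeFull.mp heT i
        · intro _ h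
          exact absurd h he

lemma numMaxForests_eq_card_filter (G' : FinGraph) :
    G'.numMaxForests
      = (Finset.univ.filter (fun T : Finset G'.E => G'.IsMaxForest T)).card := by
  rw [FinGraph.numMaxForests, Nat.card_eq_fintype_card]
  exact Fintype.card_subtype _

end Subdiv4
end FinGraph

/-- The number of maximal spanning forests of the `n`-fragmentation `Γ_n` equals the
Kirchhoff polynomial of `Γ` evaluated at `x_e = n_e`. -/
theorem card_forests_subdivide (G : FinGraph) (n : G.E → ℕ+) :
    (G.subdivide n).numMaxForests = G.kirchhoff ℕ (fun e => (n e : ℕ)) := by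
  classical
  rw [FinGraph.numMaxForests_eq_card_filter, FinGraph.kirchhoff]
  rw [Finset.card_eq_sum_card_fiberwise
    (f := fun S => FinGraph.edgeFull S)
    (t := Finset.univ.filter (fun T : Finset G.E => G.IsMaxForest T))
    (fun S hS => by
      simp only [Finset.mem_coe, Finset.mem_filter, Finset.mem_univ, true_and] at hS ⊢
      exact ((FinGraph.isMaxForest_subdivide_iff S).mp hS).1)]
  refine Finset.sum_congr (by ext T; simp) fun T hT => ?_
  rw [Finset.mem_filter] at hT
  exact FinGraph.fiber_card T hT.2
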